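/- Let n≥1 be an integer and h>0. There exists an operator 𝒦∈𝔎 (independent of φ) such that for every n-times continuously differentiable function φ on ℝ^d and every x∈ℝ^d: Σ_{λ∈Λ₁ⁿ} |δ̄_{h,λ}φ(x)|² ≤ ‖Λ₁‖^{2n} · 𝒦(|Dⁿφ|²)(x). -/

import Mathlib

open scoped BigOperators
open MeasureTheory

noncomputable section

/-- `ℝ^d` with Euclidean norm. -/
abbrev Vec (d : ℕ) := EuclideanSpace ℝ (Fin d)

namespace GK

variable {d : ℕ}

/-- forward difference `δ_{h,λ}φ`. -/
def del (h : ℝ) (l : Vec d) (φ : Vec d → ℝ) (x : Vec d) : ℝ :=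
  (φ (x + h • l) - φ x) / h

/-- symmetric second difference `Δ_{h,λ}φ`. -/
def del2 (h : ℝ) (l : Vec d) (φ : Vec d → ℝ) (x : Vec d) : ℝ :=
  (φ (x + h • l) - 2 * φ x + φ (x - h • l)) / h ^ 2

/-- `i`-th partial derivative `D_iφ`. -/
def pd (i : Fin d) (φ : Vec d → ℝ) (x : Vec d) : ℝ :=
  fderiv ℝ φ x (EuclideanSpace.single i 1)

/-- second partial derivatives `D_{ij}φ`. -/
def pd2 (i j : Fin d) (φ : Vec d → ℝ) (x : Vec d) : ℝ :=
  iteratedFDeriv ℝ 2 φ x ![EuclideanSpace.single i 1, EuclideanSpace.single j 1]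

/-- The index type for `Λ = Λ₁ ∪ Λ₂`: `Sum.inl` is an element of `Λ₁`,
`Sum.inr i` stands for the vector `ℓⁱ ∈ Λ₂`. -/
abbrev Dir (L1 : Finset (Vec d)) : Type _ := {l : Vec d // l ∈ L1} ⊕ Fin d

/-- the subtype of elements of `Λ₁`. -/
abbrev L1t (L1 : Finset (Vec d)) := {l : Vec d // l ∈ L1}

/-- the weighted difference operator `δ̄_{h,λ}`, `λ ∈ Λ`:
`τ_λ δ_{h,λ}` on `Λ₁` and `τ₀ D_i` on `Λ₂`. -/
def dbar (h τ₀ : ℝ) (τ : Vec d → ℝ) {L1 : Finset (Vec d)} :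
    Dir L1 → (Vec d → ℝ) → Vec d → ℝ
  | Sum.inl l => fun φ x => τ l.1 * del h l.1 φ x
  | Sum.inr i => fun φ x => τ₀ * pd i φ x

/-- the shift operator `T_{h,λ}`, `λ ∈ Λ`: a genuine shift on `Λ₁`, the identity on `Λ₂`. -/
def shiftD (h : ℝ) {L1 : Finset (Vec d)} : Dir L1 → (Vec d → ℝ) → Vec d → ℝ
  | Sum.inl l => fun φ x => φ (x + h • l.1)
  | Sum.inr _ => fun φ x => φ x

/-- `δ̄_{h,λ}` for a multivector `λ ∈ Λᵏ`. -/
def dbarT (h τ₀ : ℝ) (τ : Vec d → ℝ) {L1 : Finset (Vec d)} {k : ℕ}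
    (lam : Fin k → Dir L1) (φ : Vec d → ℝ) : Vec d → ℝ :=
  (List.ofFn lam).foldr (fun a ψ => dbar h τ₀ τ a ψ) φ

/-- `T_{h,λ}` for a multivector `λ ∈ Λᵏ`. -/
def shiftT (h : ℝ) {L1 : Finset (Vec d)} {k : ℕ}
    (lam : Fin k → Dir L1) (φ : Vec d → ℝ) : Vec d → ℝ :=
  (List.ofFn lam).foldr (fun a ψ => shiftD h a ψ) φ

/-- `|Λ₁|² = Σ_{λ∈Λ₁} |λ|²`. -/
def normL1sq (L1 : Finset (Vec d)) : ℝ := ∑ l ∈ L1, ‖l‖ ^ 2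

/-- `‖Λ₁‖² = Σ_{λ∈Λ₁} |τ_λ λ|²`. -/
def wnormL1sq (L1 : Finset (Vec d)) (τ : Vec d → ℝ) : ℝ := ∑ l ∈ L1, ‖τ l • l‖ ^ 2

/-- the operator `L⁰_h` (at a fixed time, `qt μ`, `pt μ` being the coefficients
as functions of `x`). -/
def L0 (h : ℝ) (L1 : Finset (Vec d)) (qt pt : Vec d → Vec d → ℝ)
    (φ : Vec d → ℝ) (x : Vec d) : ℝ :=
  h⁻¹ * ∑ l ∈ L1, qt l x * del h l φ x + ∑ l ∈ L1, pt l x * del h l φ x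

/-- the quadratic form `𝒬(φ) = Σ_{μ∈Λ₁} χ_μ (δ_{h,μ}φ)²`, `χ_μ = q_μ + h p_μ`. -/
def Qform (h : ℝ) (L1 : Finset (Vec d)) (qt pt : Vec d → Vec d → ℝ)
    (φ : Vec d → ℝ) (x : Vec d) : ℝ :=
  ∑ l ∈ L1, (qt l x + h * pt l x) * (del h l φ x) ^ 2

/-- `Q_μ φ = h⁻¹ Σ_{λ∈Λ₁} (δ̄_{h,μ} q_λ) δ_{h,λ}φ` for a multivector `μ`. -/
def Qmu (h τ₀ : ℝ) (τ : Vec d → ℝ) (L1 : Finset (Vec d)) {k : ℕ}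
    (qt : Vec d → Vec d → ℝ) (lam : Fin k → Dir L1) (φ : Vec d → ℝ) (x : Vec d) : ℝ :=
  h⁻¹ * ∑ l ∈ L1, dbarT h τ₀ τ lam (qt l) x * del h l φ x

/-- `P_μ φ = Σ_{λ∈Λ₁} (δ̄_{h,μ} p_λ) δ_{h,λ}φ` for a multivector `μ`. -/
def Pmu (h τ₀ : ℝ) (τ : Vec d → ℝ) (L1 : Finset (Vec d)) {k : ℕ}
    (pt : Vec d → Vec d → ℝ) (lam : Fin k → Dir L1) (φ : Vec d → ℝ) (x : Vec d) : ℝ :=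
  ∑ l ∈ L1, dbarT h τ₀ τ lam (pt l) x * del h l φ x

/-- `L⁰_μ = Q_μ + P_μ`. -/
def L0mu (h τ₀ : ℝ) (τ : Vec d → ℝ) (L1 : Finset (Vec d)) {k : ℕ}
    (qt pt : Vec d → Vec d → ℝ) (lam : Fin k → Dir L1) (φ : Vec d → ℝ) (x : Vec d) : ℝ :=
  Qmu h τ₀ τ L1 qt lam φ x + Pmu h τ₀ τ L1 pt lam φ x

/-- `A₁(φ) = 2 Σ_{λ∈Λ} (δ̄_{h,λ}φ) L⁰_λ T_{h,λ}φ`. -/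
def A1form (h τ₀ : ℝ) (τ : Vec d → ℝ) (L1 : Finset (Vec d))
    (qt pt : Vec d → Vec d → ℝ) (φ : Vec d → ℝ) (x : Vec d) : ℝ :=
  2 * ∑ a : Dir L1, dbar h τ₀ τ a φ x * L0mu h τ₀ τ L1 qt pt ![a] (shiftD h a φ) x

/-- membership in the class `𝔎` of bounded operators on bounded Borel functions
preserving the cone of nonnegative functions and with `𝒦1 ≤ 1`. -/
def MemFrakK (K : (Vec d → ℝ) → Vec d → ℝ) : Prop :=
  (∀ φ : Vec d → ℝ, Measurable φ → Bornology.IsBounded (Set.range φ) →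
      Measurable (K φ) ∧ Bornology.IsBounded (Set.range (K φ))) ∧
  (∀ φ : Vec d → ℝ, (∀ x, 0 ≤ φ x) → ∀ x, 0 ≤ K φ x) ∧
  ∀ x, K (fun _ => (1 : ℝ)) x ≤ 1

/-- inequality (3.24.1) of Assumption 2.4 (A4), at a fixed time. -/
def IneqA4 (h τ₀ : ℝ) (τ : Vec d → ℝ) (L1 : Finset (Vec d))
    (qt pt : Vec d → Vec d → ℝ) (ct : Vec d → ℝ) (δ K₁ : ℝ) (m : ℕ)
    (K : (Vec d → ℝ) → Vec d → ℝ) (φ : Vec d → ℝ) (x : Vec d) : Prop :=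
  (m : ℝ) * A1form h τ₀ τ L1 qt pt φ x ≤
    (1 - δ) * (∑ a : Dir L1, Qform h L1 qt pt (dbar h τ₀ τ a φ) x)
    + K₁ * Qform h L1 qt pt φ x
    + 2 * (1 - δ) * ct x * K (fun y => ∑ a : Dir L1, (dbar h τ₀ τ a φ y) ^ 2) x

/-- inequality (3.24.01) of Assumption 2.5 (A5), at a fixed time. -/
def IneqA5 (h τ₀ : ℝ) (τ : Vec d → ℝ) (L1 : Finset (Vec d))
    (qt pt : Vec d → Vec d → ℝ) (ct : Vec d → ℝ) (δ K₁ : ℝ) (n : ℕ)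
    (K : (Vec d → ℝ) → Vec d → ℝ) (φ : Vec d → ℝ) (x : Vec d) : Prop :=
  (n : ℝ) * (∑ a : Dir L1, A1form h τ₀ τ L1 qt pt (dbar h τ₀ τ a φ) x)
  + (n : ℝ) * ((n : ℝ) - 1) *
      (∑ lam : Fin 2 → Dir L1,
        dbarT h τ₀ τ lam φ x * Qmu h τ₀ τ L1 qt lam (shiftT h lam φ) x)
  ≤ (1 - δ) * (∑ lam : Fin 2 → Dir L1, Qform h L1 qt pt (dbarT h τ₀ τ lam φ) x)
    + K₁ * (∑ a : Dir L1, Qform h L1 qt pt (dbar h τ₀ τ a φ) x)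
    + 2 * (1 - δ) * ct x *
        K (fun y => ∑ lam : Fin 2 → Dir L1, (dbarT h τ₀ τ lam φ y) ^ 2) x
    + K₁ * K (fun y => ∑ a : Dir L1, (dbar h τ₀ τ a φ y) ^ 2) x

/-- regularity and boundedness of the coefficients `q, p, c` (the `q,p,c` part of
Assumption 2.1 (A1(m))). -/
def CoefReg (T : ℝ) (L1 : Finset (Vec d)) (m : ℕ)
    (q p : Vec d → ℝ → Vec d → ℝ) (c : ℝ → Vec d → ℝ) (M : ℕ → ℝ) : Prop :=
  (∀ l ∈ L1, ∀ t ∈ Set.Icc (0 : ℝ) T, ContDiff ℝ (m : ℕ∞) (q l t) ∧ ContDiff ℝ (m : ℕ∞) (p l t)) ∧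
  (∀ t ∈ Set.Icc (0 : ℝ) T, ContDiff ℝ (m : ℕ∞) (c t)) ∧
  (∀ k ≤ m, ∀ l ∈ L1,
    ContinuousOn (fun tx : ℝ × Vec d => iteratedFDeriv ℝ k (q l tx.1) tx.2)
      (Set.Icc (0 : ℝ) T ×ˢ Set.univ) ∧
    ContinuousOn (fun tx : ℝ × Vec d => iteratedFDeriv ℝ k (p l tx.1) tx.2)
      (Set.Icc (0 : ℝ) T ×ˢ Set.univ)) ∧
  (∀ k ≤ m,
    ContinuousOn (fun tx : ℝ × Vec d => iteratedFDeriv ℝ k (c tx.1) tx.2)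
      (Set.Icc (0 : ℝ) T ×ˢ Set.univ)) ∧
  (∀ k ≤ m, ∀ t ∈ Set.Icc (0 : ℝ) T, ∀ x,
    (∑ l ∈ L1, (‖iteratedFDeriv ℝ k (q l t) x‖ ^ 2 + ‖iteratedFDeriv ℝ k (p l t) x‖ ^ 2))
      + ‖iteratedFDeriv ℝ k (c t) x‖ ^ 2 ≤ (M k) ^ 2)

/-- regularity of the free terms `f, g` (the `f,g` part of Assumption 2.1 (A1(m))). -/
def FreeReg (T : ℝ) (m : ℕ) (f : ℝ → Vec d → ℝ) (g : Vec d → ℝ) : Prop :=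
  (∀ t ∈ Set.Icc (0 : ℝ) T, ContDiff ℝ (m : ℕ∞) (f t)) ∧
  (∀ k ≤ m,
    ContinuousOn (fun tx : ℝ × Vec d => iteratedFDeriv ℝ k (f tx.1) tx.2)
      (Set.Icc (0 : ℝ) T ×ˢ Set.univ)) ∧
  ContDiff ℝ (m : ℕ∞) g

/-- `u` is a bounded continuous solution of the integral equation (2.1). -/
def IsSol (h T : ℝ) (L1 : Finset (Vec d)) (q p : Vec d → ℝ → Vec d → ℝ)
    (c : ℝ → Vec d → ℝ) (f : ℝ → Vec d → ℝ) (g : Vec d → ℝ)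
    (u : ℝ → Vec d → ℝ) : Prop :=
  (∃ B, ∀ t ∈ Set.Icc (0 : ℝ) T, ∀ x, |u t x| ≤ B) ∧
  ContinuousOn (fun tx : ℝ × Vec d => u tx.1 tx.2) (Set.Icc (0 : ℝ) T ×ˢ Set.univ) ∧
  ∀ t ∈ Set.Icc (0 : ℝ) T, ∀ x,
    u t x = g x + ∫ s in (0 : ℝ)..t,
      (L0 h L1 (fun l => q l s) (fun l => p l s) (u s) x - c s x * u s x + f s x)

/-- `sup_{H_T} ψ`. -/
def supHT (T : ℝ) (ψ : ℝ → Vec d → ℝ) : ℝ :=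
  sSup {r : ℝ | ∃ t ∈ Set.Icc (0 : ℝ) T, ∃ x, r = ψ t x}

/-- `F_m = Σ_{k ≤ m} sup_{H_T} |Dᵏf|`. -/
def Fnorm (T : ℝ) (m : ℕ) (f : ℝ → Vec d → ℝ) : ℝ :=
  ∑ k ∈ Finset.range (m + 1), supHT T fun t x => ‖iteratedFDeriv ℝ k (f t) x‖

/-- `G_m = Σ_{k ≤ m} sup_{ℝ^d} |Dᵏg|`. -/
def Gnorm (m : ℕ) (g : Vec d → ℝ) : ℝ :=
  ∑ k ∈ Finset.range (m + 1), sSup (Set.range fun x => ‖iteratedFDeriv ℝ k g x‖)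

end GK
section StmtAux

open GK Set

variable {d : ℕ}

/-- clamp to `[0,1]`. -/
def clampR (r : ℝ) : ℝ := max 0 (min 1 r)

lemma clampR_mem (r : ℝ) : clampR r ∈ Set.Icc (0:ℝ) 1 :=
  ⟨le_max_left _ _, max_le zero_le_one (min_le_left _ _)⟩

lemma clampR_eq {r : ℝ} (hr : r ∈ Set.Icc (0:ℝ) 1) : clampR r = r := by
  rcases hr with ⟨h0, h1⟩
  unfold clampR
  rw [min_eq_right h1, max_eq_right h0]

lemma continuous_clampR : Continuous clampR :=
  continuous_const.max (continuous_const.min continuous_id)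

lemma dbarT_zero' (h τ₀ : ℝ) (τ : Vec d → ℝ) {L1 : Finset (Vec d)}
    (lam : Fin 0 → Dir L1) (φ : Vec d → ℝ) : dbarT h τ₀ τ lam φ = φ := by
  simp [dbarT]

lemma dbarT_succ' (h τ₀ : ℝ) (τ : Vec d → ℝ) {L1 : Finset (Vec d)} {m : ℕ}
    (lam : Fin (m+1) → Dir L1) (φ : Vec d → ℝ) :
    dbarT h τ₀ τ lam φ = dbar h τ₀ τ (lam 0) (dbarT h τ₀ τ (fun i => lam i.succ) φ) := by
  simp [dbarT, List.ofFn_succ]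

lemma dbar_inl' (h τ₀ : ℝ) (τ : Vec d → ℝ) {L1 : Finset (Vec d)} (l : L1t L1)
    (φ : Vec d → ℝ) : dbar h τ₀ τ (Sum.inl l) φ = fun x => τ l.1 * del h l.1 φ x := rfl

lemma contDiff_del {k : ℕ∞} {φ : Vec d → ℝ} (hφ : ContDiff ℝ k φ) (h : ℝ) (l : Vec d) :
    ContDiff ℝ k (del h l φ) := by
  have h1 : ContDiff ℝ k (fun x : Vec d => φ (x + h • l)) :=
    hφ.comp (contDiff_id.add contDiff_const)
  exact (h1.sub hφ).div_const h

lemma contDiff_dbarT (h : ℝ) (τ : Vec d → ℝ) {L1 : Finset (Vec d)} {k : ℕ∞} :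
    ∀ {m : ℕ} (lam : Fin m → L1t L1) (φ : Vec d → ℝ), ContDiff ℝ k φ →
      ContDiff ℝ k (dbarT h 0 τ (fun j => Sum.inl (lam j)) φ) := by
  intro m
  induction m with
  | zero => intro lam φ hφ; rw [dbarT_zero']; exact hφ
  | succ m ih =>
    intro lam φ hφ
    rw [dbarT_succ', dbar_inl']
    exact contDiff_const.mul (contDiff_del (ih (fun i => lam i.succ) φ hφ) h _)

lemma hasFDerivAt_shift (φ : Vec d → ℝ) {y : Vec d} (c : Vec d)
    (hφ : DifferentiableAt ℝ φ (y + c)) :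
    HasFDerivAt (fun x => φ (x + c)) (fderiv ℝ φ (y + c)) y := by
  have h1 : HasFDerivAt (fun x : Vec d => x + c) (ContinuousLinearMap.id ℝ (Vec d)) y :=
    (hasFDerivAt_id y).add_const c
  have h2 := hφ.hasFDerivAt.comp y h1
  rw [ContinuousLinearMap.comp_id] at h2
  exact h2

lemma hasFDerivAt_del {φ : Vec d → ℝ} (hφ : Differentiable ℝ φ) (h : ℝ) (l : Vec d) (y : Vec d) :
    HasFDerivAt (del h l φ) ((h⁻¹ : ℝ) • (fderiv ℝ φ (y + h • l) - fderiv ℝ φ y)) y := by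
  have h2 := ((hasFDerivAt_shift φ (h • l) (hφ _)).sub (hφ y).hasFDerivAt).const_smul (h⁻¹ : ℝ)
  have : del h l φ = fun x => (h⁻¹ : ℝ) • (φ (x + h • l) - φ x) := by
    funext x; simp [del, smul_eq_mul, div_eq_inv_mul]
  rw [this]
  exact h2

lemma fderiv_del_apply {φ : Vec d → ℝ} (hφ : Differentiable ℝ φ) (h : ℝ) (l : Vec d)
    (y v : Vec d) :
    fderiv ℝ (del h l φ) y v = del h l (fun z => fderiv ℝ φ z v) y := by
  rw [(hasFDerivAt_del hφ h l y).fderiv]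
  simp [del, ContinuousLinearMap.smul_apply, ContinuousLinearMap.sub_apply,
    smul_eq_mul, div_eq_inv_mul]

lemma fderiv_dbarT (h : ℝ) (τ : Vec d → ℝ) {L1 : Finset (Vec d)} :
    ∀ {m : ℕ} (lam : Fin m → L1t L1) (ψ : Vec d → ℝ), ContDiff ℝ 1 ψ → ∀ y v,
      fderiv ℝ (dbarT h 0 τ (fun j => Sum.inl (lam j)) ψ) y v
        = dbarT h 0 τ (fun j => Sum.inl (lam j)) (fun z => fderiv ℝ ψ z v) y := by
  intro m
  induction m with
  | zero => intro lam ψ hψ y v; rw [dbarT_zero', dbarT_zero']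
  | succ m ih =>
    intro lam ψ hψ y v
    rw [dbarT_succ', dbarT_succ', dbar_inl', dbar_inl']
    have hΨd : Differentiable ℝ (dbarT h 0 τ (fun j => Sum.inl (lam j.succ)) ψ) :=
      (contDiff_dbarT h τ (fun i => lam i.succ) ψ hψ).differentiable (by norm_num)
    have H : HasFDerivAt
        (fun x => τ (lam 0).1 * del h (lam 0).1 (dbarT h 0 τ (fun j => Sum.inl (lam j.succ)) ψ) x)
        (τ (lam 0).1 • ((h⁻¹ : ℝ) •
          (fderiv ℝ (dbarT h 0 τ (fun j => Sum.inl (lam j.succ)) ψ) (y + h • (lam 0).1)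
            - fderiv ℝ (dbarT h 0 τ (fun j => Sum.inl (lam j.succ)) ψ) y))) y :=
      (hasFDerivAt_del hΨd h _ y).const_mul _
    rw [H.fderiv]
    have hv1 := ih (fun i => lam i.succ) ψ hψ (y + h • (lam 0).1) v
    have hv2 := ih (fun i => lam i.succ) ψ hψ y v
    simp only [ContinuousLinearMap.smul_apply, ContinuousLinearMap.sub_apply, smul_eq_mul]
    rw [hv1, hv2]
    simp [del, div_eq_inv_mul]

lemma del_eq_fderiv {φ : Vec d → ℝ} (hφ : ContDiff ℝ 1 φ) {h : ℝ} (hh : 0 < h)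
    (l : Vec d) (x : Vec d) :
    ∃ θ ∈ Set.Icc (0:ℝ) 1, del h l φ x = fderiv ℝ φ (x + (h * θ) • l) l := by
  have hφd : Differentiable ℝ φ := hφ.differentiable (by norm_num)
  have hg : ∀ t : ℝ, HasDerivAt (fun t : ℝ => φ (x + t • l)) (fderiv ℝ φ (x + t • l) l) t := by
    intro t
    have h1 : HasDerivAt (fun t : ℝ => x + t • l) l t := by
      simpa using ((hasDerivAt_id t).smul_const l).const_add x
    exact (hφd (x + t • l)).hasFDerivAt.comp_hasDerivAt t h1
  obtain ⟨c, hc, hceq⟩ := exists_hasDerivAt_eq_slope (fun t : ℝ => φ (x + t • l))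
    (fun t => fderiv ℝ φ (x + t • l) l) hh
    (fun t _ => (hg t).continuousAt.continuousWithinAt)
    (fun t _ => hg t)
  refine ⟨c / h, ⟨div_nonneg hc.1.le hh.le, (div_le_one hh).2 hc.2.le⟩, ?_⟩
  have hch : h * (c / h) = c := by field_simp
  rw [hch, hceq]
  simp [del]

lemma abs_dbarT_le (h : ℝ) (hh : 0 < h) (τ : Vec d → ℝ) {L1 : Finset (Vec d)} :
    ∀ (m : ℕ) (lam : Fin m → L1t L1) (φ : Vec d → ℝ), ContDiff ℝ (m : ℕ∞) φ → ∀ x,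
    ∃ s : Fin m → ℝ, (∀ i, s i ∈ Set.Icc (0:ℝ) 1) ∧
      |dbarT h 0 τ (fun j => Sum.inl (lam j)) φ x|
        ≤ (∏ i, |τ (lam i).1| * ‖(lam i).1‖) *
          ‖iteratedFDeriv ℝ m φ (x + ∑ i, (h * s i) • (lam i).1)‖ := by
  intro m
  induction m with
  | zero =>
    intro lam φ hφ x
    refine ⟨fun i => 0, fun i => i.elim0, ?_⟩
    rw [dbarT_zero']
    simp [norm_iteratedFDeriv_zero, Real.norm_eq_abs]
  | succ m ih =>
    intro lam φ hφ x
    have hφ1 : ContDiff ℝ 1 φ := hφ.of_le (by exact_mod_cast Nat.one_le_iff_ne_zero.2 (Nat.succ_ne_zero m))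
    have hΨ1 : ContDiff ℝ 1 (dbarT h 0 τ (fun j => Sum.inl (lam j.succ)) φ) :=
      contDiff_dbarT h τ (fun i => lam i.succ) φ hφ1
    obtain ⟨θ, hθ, hθeq⟩ := del_eq_fderiv hΨ1 hh (lam 0).1 x
    set y₀ := x + (h * θ) • (lam 0).1 with hy₀
    have hcomm := fderiv_dbarT h τ (fun i => lam i.succ) φ hφ1 y₀ (lam 0).1
    -- φ₁ := directional derivative of φ in direction (lam 0).1
    set φ₁ : Vec d → ℝ := fun z => fderiv ℝ φ z (lam 0).1 with hφ₁def
    have hfd : ContDiff ℝ (m : ℕ∞) (fderiv ℝ φ) := by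
      apply hφ.fderiv_right
      exact_mod_cast le_refl ((m : ℕ∞) + 1)
    have hφ₁ : ContDiff ℝ (m : ℕ∞) φ₁ := hfd.clm_apply contDiff_const
    obtain ⟨s', hs', hb⟩ := ih (fun i => lam i.succ) φ₁ hφ₁ y₀
    set z := y₀ + ∑ i, (h * s' i) • (lam i.succ).1 with hz
    -- bound ‖iteratedFDeriv m φ₁ z‖ by ‖l₀‖ * ‖iteratedFDeriv (m+1) φ z‖
    have hct : ContDiff ℝ (m : ℕ∞) (fderiv ℝ φ) := hfd
    have happ : φ₁ = (ContinuousLinearMap.apply ℝ ℝ (lam 0).1) ∘ (fderiv ℝ φ) := rfl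
    have hnorm : ‖iteratedFDeriv ℝ m φ₁ z‖ ≤ ‖(lam 0).1‖ * ‖iteratedFDeriv ℝ (m+1) φ z‖ := by
      rw [happ, ContinuousLinearMap.iteratedFDeriv_comp_left _ (hct.contDiffAt (x := z)) le_rfl]
      calc ‖(ContinuousLinearMap.apply ℝ ℝ (lam 0).1).compContinuousMultilinearMap
              (iteratedFDeriv ℝ m (fderiv ℝ φ) z)‖
          ≤ ‖ContinuousLinearMap.apply ℝ ℝ (lam 0).1‖ * ‖iteratedFDeriv ℝ m (fderiv ℝ φ) z‖ :=
            ContinuousLinearMap.norm_compContinuousMultilinearMap_le _ _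
        _ ≤ ‖(lam 0).1‖ * ‖iteratedFDeriv ℝ m (fderiv ℝ φ) z‖ := by
            apply mul_le_mul_of_nonneg_right _ (norm_nonneg _)
            apply ContinuousLinearMap.opNorm_le_bound _ (norm_nonneg _)
            intro f
            rw [mul_comm]
            exact f.le_opNorm _
        _ = ‖(lam 0).1‖ * ‖iteratedFDeriv ℝ (m+1) φ z‖ := by
            rw [norm_iteratedFDeriv_fderiv]
    refine ⟨(Fin.cons θ s' : Fin (m+1) → ℝ), ?_, ?_⟩
    · intro i
      induction i using Fin.cases with
      | zero => simpa using hθ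
      | succ j => simpa using hs' j
    · have hpt : x + ∑ i : Fin (m+1), (h * (Fin.cons θ s' : Fin (m+1) → ℝ) i) • (lam i).1 = z := by
        rw [hz, hy₀, Fin.sum_univ_succ]
        simp only [Fin.cons_zero, Fin.cons_succ]
        abel
      rw [hpt, dbarT_succ', dbar_inl']
      have e1 : |τ (lam 0).1 * del h (lam 0).1 (dbarT h 0 τ (fun j => Sum.inl (lam j.succ)) φ) x|
          = |τ (lam 0).1| * |dbarT h 0 τ (fun j => Sum.inl (lam j.succ)) φ₁ y₀| := by
        rw [abs_mul, hθeq, hcomm]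
      have e2 : |dbarT h 0 τ (fun j => Sum.inl (lam j.succ)) φ₁ y₀|
          ≤ (∏ i : Fin m, |τ (lam i.succ).1| * ‖(lam i.succ).1‖) *
              (‖(lam 0).1‖ * ‖iteratedFDeriv ℝ (m+1) φ z‖) :=
        hb.trans (mul_le_mul_of_nonneg_left hnorm
          (Finset.prod_nonneg fun i _ => mul_nonneg (abs_nonneg _) (norm_nonneg _)))
      calc |τ (lam 0).1 * del h (lam 0).1 (dbarT h 0 τ (fun j => Sum.inl (lam j.succ)) φ) x|
          = |τ (lam 0).1| * |dbarT h 0 τ (fun j => Sum.inl (lam j.succ)) φ₁ y₀| := e1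
        _ ≤ |τ (lam 0).1| * ((∏ i : Fin m, |τ (lam i.succ).1| * ‖(lam i.succ).1‖) *
              (‖(lam 0).1‖ * ‖iteratedFDeriv ℝ (m+1) φ z‖)) :=
            mul_le_mul_of_nonneg_left e2 (abs_nonneg _)
        _ = (∏ i : Fin (m+1), |τ (lam i).1| * ‖(lam i).1‖) * ‖iteratedFDeriv ℝ (m+1) φ z‖ := by
            rw [Fin.prod_univ_succ]; ring

lemma le_ciSup_rat {n : ℕ} (F : (Fin n → ℝ) → ℝ) (hF : Continuous F)
    (hbdd : BddAbove (Set.range fun t : Fin n → ℚ => F (fun i => (t i : ℝ))))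
    (s : Fin n → ℝ) :
    F s ≤ ⨆ t : Fin n → ℚ, F (fun i => (t i : ℝ)) := by
  set M := ⨆ t : Fin n → ℚ, F (fun i => (t i : ℝ)) with hM
  have hclosed : IsClosed {u : Fin n → ℝ | F u ≤ M} := isClosed_le hF continuous_const
  have hsub : Set.range (fun t : Fin n → ℚ => fun i => ((t i : ℝ))) ⊆ {u | F u ≤ M} := by
    rintro _ ⟨t, rfl⟩
    exact le_ciSup hbdd t
  have hrange : Set.range (fun t : Fin n → ℚ => fun i => ((t i : ℝ)))
      = Set.pi Set.univ (fun _ : Fin n => Set.range ((↑) : ℚ → ℝ)) := by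
    ext u
    constructor
    · rintro ⟨t, rfl⟩ i _
      exact ⟨t i, rfl⟩
    · intro hu
      choose t ht using fun i => hu i (Set.mem_univ i)
      exact ⟨t, funext ht⟩
  have hdense : Dense (Set.range (fun t : Fin n → ℚ => fun i => ((t i : ℝ)))) := by
    rw [hrange]
    exact dense_pi Set.univ fun i _ => Rat.denseRange_cast
  have : closure (Set.range (fun t : Fin n → ℚ => fun i => ((t i : ℝ)))) ⊆ {u | F u ≤ M} :=
    closure_minimal hsub hclosed
  exact this (hdense.closure_eq ▸ Set.mem_univ s)

end StmtAux

open GK in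
/-- First inequality in (3.21.5): `Σ_{λ∈Λ₁ⁿ} |δ̄_{h,λ}φ|² ≤ ‖Λ₁‖^{2n} 𝒦(|Dⁿφ|²)`
for some `𝒦 ∈ 𝔎` independent of `φ`. -/
theorem stmt5 {d : ℕ} (L1 : Finset (Vec d)) (hL1 : (0 : Vec d) ∉ L1)
    (τ : Vec d → ℝ) (hτ : ∀ l ∈ L1, 0 ≤ τ l)
    (n : ℕ) (hn : 1 ≤ n) (h : ℝ) (hh : 0 < h) :
    ∃ K : (Vec d → ℝ) → Vec d → ℝ, MemFrakK K ∧
      ∀ φ : Vec d → ℝ, ContDiff ℝ (n : ℕ∞) φ → ∀ x,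
        (∑ lam : Fin n → L1t L1, (dbarT h 0 τ (fun j => Sum.inl (lam j)) φ x) ^ 2)
          ≤ (wnormL1sq L1 τ) ^ n * K (fun y => ‖iteratedFDeriv ℝ n φ y‖ ^ 2) x := by
  classical
  haveI : Nonempty (Fin n → ℚ) := ⟨fun _ => 0⟩
  set c : ℝ := wnormL1sq L1 τ with hcdef
  set w : (Fin n → L1t L1) → ℝ := fun lam => ∏ i, ‖τ (lam i).1 • (lam i).1‖ ^ 2 with hwdef
  set P : (Fin n → L1t L1) → (Fin n → ℚ) → Vec d → Vec d :=
    fun lam t x => x + ∑ i, (h * clampR (t i : ℝ)) • (lam i).1 with hPdef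
  set K : (Vec d → ℝ) → Vec d → ℝ :=
    fun ψ x => (c ^ n)⁻¹ * ∑ lam : Fin n → L1t L1, w lam * ⨆ t : Fin n → ℚ, ψ (P lam t x)
    with hKdef
  have hc0 : 0 ≤ c := Finset.sum_nonneg fun l _ => pow_nonneg (norm_nonneg _) 2
  have hw0 : ∀ lam, 0 ≤ w lam :=
    fun lam => Finset.prod_nonneg fun i _ => pow_nonneg (norm_nonneg _) 2
  have hsum : ∑ lam : Fin n → L1t L1, w lam = c ^ n := by
    have h1 : c = ∑ l : L1t L1, ‖τ l.1 • l.1‖ ^ 2 := (Finset.sum_coe_sort L1 _).symm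
    rw [h1, Fintype.sum_pow (fun l : L1t L1 => ‖τ l.1 • l.1‖ ^ 2) n]
  have hinv : (c ^ n)⁻¹ * c ^ n ≤ 1 := by
    by_cases hcz : c ^ n = 0
    · simp [hcz]
    · rw [inv_mul_cancel₀ hcz]
  have hKabs : ∀ (ψ : Vec d → ℝ) (C : ℝ), (∀ y, |ψ y| ≤ C) → ∀ x, |K ψ x| ≤ C := by
    intro ψ C hB x
    have hC0 : 0 ≤ C := le_trans (abs_nonneg _) (hB 0)
    have hbdd : ∀ lam, BddAbove (Set.range fun t : Fin n → ℚ => ψ (P lam t x)) := by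
      intro lam
      exact ⟨C, by rintro _ ⟨t, rfl⟩; exact (abs_le.1 (hB _)).2⟩
    have habs : ∀ lam : Fin n → L1t L1, |(⨆ t : Fin n → ℚ, ψ (P lam t x))| ≤ C := by
      intro lam
      rw [abs_le]
      constructor
      · exact le_trans (abs_le.1 (hB (P lam (fun _ => 0) x))).1 (le_ciSup (hbdd lam) _)
      · exact ciSup_le fun t => (abs_le.1 (hB _)).2
    have h2 : |∑ lam : Fin n → L1t L1, w lam * ⨆ t : Fin n → ℚ, ψ (P lam t x)| ≤ c ^ n * C := by
      calc |∑ lam : Fin n → L1t L1, w lam * ⨆ t : Fin n → ℚ, ψ (P lam t x)|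
          ≤ ∑ lam : Fin n → L1t L1, |w lam * ⨆ t : Fin n → ℚ, ψ (P lam t x)| :=
            Finset.abs_sum_le_sum_abs _ _
        _ ≤ ∑ lam : Fin n → L1t L1, w lam * C := by
            apply Finset.sum_le_sum
            intro lam _
            rw [abs_mul, abs_of_nonneg (hw0 lam)]
            exact mul_le_mul_of_nonneg_left (habs lam) (hw0 lam)
        _ = c ^ n * C := by rw [← Finset.sum_mul, hsum]
    calc |K ψ x| = (c ^ n)⁻¹ * |∑ lam : Fin n → L1t L1, w lam * ⨆ t, ψ (P lam t x)| := by
          rw [hKdef]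
          simp only []
          rw [abs_mul, abs_of_nonneg (inv_nonneg.2 (pow_nonneg hc0 n))]
      _ ≤ (c ^ n)⁻¹ * (c ^ n * C) :=
          mul_le_mul_of_nonneg_left h2 (inv_nonneg.2 (pow_nonneg hc0 n))
      _ = ((c ^ n)⁻¹ * c ^ n) * C := by ring
      _ ≤ 1 * C := mul_le_mul_of_nonneg_right hinv hC0
      _ = C := one_mul C
  refine ⟨K, ⟨?_, ?_, ?_⟩, ?_⟩
  · -- measurability and boundedness
    intro ψ hmeas hbd
    constructor
    · apply Measurable.const_mul
      apply Finset.measurable_sum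
      intro lam _
      apply Measurable.const_mul
      apply Measurable.iSup
      intro t
      exact hmeas.comp ((continuous_id.add continuous_const).measurable)
    · obtain ⟨C, hC⟩ := isBounded_iff_forall_norm_le.1 hbd
      have hB : ∀ y, |ψ y| ≤ C := fun y => by
        simpa [Real.norm_eq_abs] using hC (ψ y) (Set.mem_range_self y)
      apply isBounded_iff_forall_norm_le.2
      refine ⟨C, ?_⟩
      rintro _ ⟨x, rfl⟩
      simpa [Real.norm_eq_abs] using hKabs ψ C hB x
  · -- nonnegativity
    intro ψ hψ x
    apply mul_nonneg (inv_nonneg.2 (pow_nonneg hc0 n))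
    apply Finset.sum_nonneg
    intro lam _
    exact mul_nonneg (hw0 lam) (Real.iSup_nonneg fun t => hψ _)
  · -- K 1 ≤ 1
    intro x
    show (c ^ n)⁻¹ * ∑ lam : Fin n → L1t L1, w lam * ⨆ t : Fin n → ℚ, (1 : ℝ) ≤ 1
    simp only [ciSup_const, mul_one]
    rw [hsum]
    exact hinv
  · -- the main inequality
    intro φ hφ x
    set ψ : Vec d → ℝ := fun y => ‖iteratedFDeriv ℝ n φ y‖ ^ 2 with hψdef
    have hψc : Continuous ψ := ((hφ.continuous_iteratedFDeriv le_rfl).norm).pow 2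
    have hψ0 : ∀ y, 0 ≤ ψ y := fun y => pow_nonneg (norm_nonneg _) 2
    have hS : (∑ lam : Fin n → L1t L1, (dbarT h 0 τ (fun j => Sum.inl (lam j)) φ x) ^ 2)
        ≤ ∑ lam : Fin n → L1t L1, w lam * ⨆ t : Fin n → ℚ, ψ (P lam t x) := by
      apply Finset.sum_le_sum
      intro lam _
      obtain ⟨s, hs, hb⟩ := abs_dbarT_le h hh τ n lam φ hφ x
      set z := x + ∑ i, (h * s i) • (lam i).1 with hz
      have h1 : (dbarT h 0 τ (fun j => Sum.inl (lam j)) φ x) ^ 2 ≤ w lam * ψ z := by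
        have h2 := pow_le_pow_left₀ (abs_nonneg _) hb 2
        rw [sq_abs] at h2
        refine h2.trans_eq ?_
        rw [mul_pow, ← Finset.prod_pow]
        congr 1
        apply Finset.prod_congr rfl
        intro i _
        rw [norm_smul, Real.norm_eq_abs]
      have h2 : ψ z ≤ ⨆ t : Fin n → ℚ, ψ (P lam t x) := by
        set F : (Fin n → ℝ) → ℝ :=
          fun u => ψ (x + ∑ i, (h * clampR (u i)) • (lam i).1) with hFdef
        have hGc : Continuous (fun v : Fin n → ℝ => ψ (x + ∑ i, (h * v i) • (lam i).1)) := by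
          apply hψc.comp
          apply continuous_const.add
          apply continuous_finset_sum
          intro i _
          exact (continuous_const.mul (continuous_apply i)).smul continuous_const
        have hFc : Continuous F := by
          apply hGc.comp
          exact continuous_pi fun i => continuous_clampR.comp (continuous_apply i)
        have hcube : IsCompact (Set.pi Set.univ fun _ : Fin n => Set.Icc (0:ℝ) 1) :=
          isCompact_univ_pi fun i => isCompact_Icc
        have hbddF : BddAbove (Set.range fun t : Fin n → ℚ => F (fun i => (t i : ℝ))) := by
          apply BddAbove.mono ?_
            ((hcube.image hGc).bddAbove)
          rintro _ ⟨t, rfl⟩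
          exact ⟨fun i => clampR (t i : ℝ), fun i _ => clampR_mem _, rfl⟩
        have hle := le_ciSup_rat F hFc hbddF s
        have hFs : F s = ψ z := by
          rw [hFdef]
          simp only []
          congr 2
          apply Finset.sum_congr rfl
          intro i _
          rw [clampR_eq (hs i)]
        rw [hFs] at hle
        exact hle
      calc (dbarT h 0 τ (fun j => Sum.inl (lam j)) φ x) ^ 2
          ≤ w lam * ψ z := h1
        _ ≤ w lam * ⨆ t : Fin n → ℚ, ψ (P lam t x) :=
            mul_le_mul_of_nonneg_left h2 (hw0 lam)
    by_cases hcz : c ^ n = 0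
    · have hcc : c = 0 := (pow_eq_zero_iff (Nat.one_le_iff_ne_zero.1 hn)).1 hcz
      have hsum0 : ∑ l ∈ L1, ‖τ l • l‖ ^ 2 = 0 := by
        have h' := hcc
        rw [hcdef] at h'
        simpa [wnormL1sq] using h'
      have hterm : ∀ l ∈ L1, ‖τ l • l‖ ^ 2 = 0 :=
        (Finset.sum_eq_zero_iff_of_nonneg
          (fun l _ => pow_nonneg (norm_nonneg _) 2)).1 hsum0
      have hwz : ∀ lam : Fin n → L1t L1, w lam = 0 := by
        intro lam
        apply Finset.prod_eq_zero (Finset.mem_univ (⟨0, hn⟩ : Fin n))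
        exact hterm _ (lam ⟨0, hn⟩).2
      have hS0 : (∑ lam : Fin n → L1t L1, (dbarT h 0 τ (fun j => Sum.inl (lam j)) φ x) ^ 2) ≤ 0 := by
        refine hS.trans_eq (Finset.sum_eq_zero fun lam _ => ?_)
        rw [hwz lam, zero_mul]
      calc (∑ lam : Fin n → L1t L1, (dbarT h 0 τ (fun j => Sum.inl (lam j)) φ x) ^ 2)
          ≤ 0 := hS0
        _ = c ^ n * K ψ x := by rw [hcz, zero_mul]
    · have hKx : c ^ n * K ψ x
          = ∑ lam : Fin n → L1t L1, w lam * ⨆ t : Fin n → ℚ, ψ (P lam t x) := by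
        rw [hKdef]
        simp only []
        rw [← mul_assoc, mul_inv_cancel₀ hcz, one_mul]
      rw [hKx]
      exact hS
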